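/- Two words u and v over a finite alphabet are n-equivalent (written u ∼ₙ v) if they have exactly the same set of subwords of length at most n. Theorem: for n ≥ 2, if u and v are distinct words both of length n+1, then u is not n-equivalent to v; i.e., there is a word w of length at most n that is a subword of exactly one of u and v. -/

import Mathlib

open List

/-- A sublist relation between cons lists with distinct heads descends to the tail. -/
private lemma cons_sublist_of_ne {A : Type*} {x y : A} {l m : List A}
    (hne : x ≠ y) (h : x :: l <+ y :: m) : x :: l <+ m := by
  cases h with
  | cons _ h => exact h
  | cons_cons => exact absurd rfl hne

/-- If deleting any index of `a :: l` yields `l`, then `a :: l` is constant. -/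
private lemma replicate_of_eraseIdx_eq_tail {A : Type*} :
    ∀ (l : List A) (a : A), (∀ i < (a :: l).length, (a :: l).eraseIdx i = l) →
      a :: l = List.replicate (l.length + 1) a := by
  intro l
  induction l with
  | nil => intro a _; rfl
  | cons y ys ih =>
    intro a h
    have h1 := h 1 (by simp)
    simp only [List.eraseIdx] at h1
    have hay : a = y := by injection h1
    subst hay
    have h2 : ∀ i < (a :: ys).length, (a :: ys).eraseIdx i = ys := by
      intro i hi
      have := h (i + 1) (by simpa using Nat.succ_lt_succ hi)
      simp only [List.eraseIdx] at this
      injection this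
    have := ih a h2
    simp only [List.length_cons]
    rw [List.replicate_succ, ← this]

private lemma head_eq {A : Type*} {n : ℕ} (hn : 2 ≤ n) {a b : A} {u₁ v₁ : List A}
    (hu : u₁.length = n) (hv : v₁.length = n)
    (H : ∀ w : List A, w.length ≤ n → ((w <+ a :: u₁) ↔ (w <+ b :: v₁))) : a = b := by
  by_contra hab
  have key : ∀ i < n, v₁ = a :: u₁.eraseIdx i := by
    intro i hi
    have hs : (a :: u₁.eraseIdx i) <+ (a :: u₁) := (u₁.eraseIdx_sublist i).cons₂ a
    have hlen : (u₁.eraseIdx i).length = n - 1 := by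
      rw [List.length_eraseIdx]; simp [hu, hi]
    have h2 := (H _ (by simp [hlen]; omega)).mp hs
    have h3 := cons_sublist_of_ne hab h2
    exact (h3.eq_of_length (by simp [hlen, hv]; omega)).symm
  have htail : v₁ = a :: u₁.tail := by
    have := key 0 (by omega)
    rwa [List.eraseIdx_zero] at this
  have h0 : ∀ i < u₁.length, u₁.eraseIdx i = u₁.tail := by
    intro i hi
    have h1 := key i (hu ▸ hi)
    rw [htail] at h1
    injection h1.symm
  obtain ⟨c, rest, rfl⟩ : ∃ c rest, u₁ = c :: rest := by
    cases u₁ with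
    | nil => simp at hu; omega
    | cons c rest => exact ⟨c, rest, rfl⟩
  have hlr : rest.length + 1 = n := by simpa using hu
  have hconst : c :: rest = List.replicate n c := by
    have := replicate_of_eraseIdx_eq_tail rest c (by simpa using h0)
    rwa [hlr] at this
  by_cases hca : c = a
  · -- u = a^(n+1); b occurs in v but not in u
    have hb : [b] <+ b :: v₁ := (List.nil_sublist v₁).cons₂ b
    have hmem := (H [b] (by simp; omega)).mpr hb
    rw [List.singleton_sublist] at hmem
    have hmem' : b = a ∨ b ∈ c :: rest := by simpa using hmem
    rcases hmem' with h | h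
    · exact hab h.symm
    · rw [hconst] at h
      exact hab (hca ▸ (List.eq_of_mem_replicate h).symm)
  · by_cases hcb : c = b
    · -- c = b ≠ a : use the word [c, a]
      subst hcb
      have hw : [c, a] <+ c :: v₁ := by
        rw [htail]
        exact ((List.nil_sublist _).cons₂ a).cons₂ c
      have h3 := (H [c, a] (by simp; omega)).mpr hw
      have h4 := cons_sublist_of_ne hca h3
      have : a ∈ c :: rest := h4.subset (by simp)
      rw [hconst] at this
      exact hca (List.eq_of_mem_replicate this).symm
    · -- c ∉ {a, b} : use the word c^n
      have hrep : List.replicate n c <+ a :: (c :: rest) :=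
        hconst ▸ List.sublist_cons_self a (c :: rest)
      have h2 := (H _ (by simp)).mp hrep
      rw [htail] at h2
      have hn1 : n = (n - 1) + 1 := by omega
      rw [hn1, List.replicate_succ] at h2
      have h3 := cons_sublist_of_ne hcb h2
      have h4 := cons_sublist_of_ne hca h3
      have hle := h4.length_le
      simp at hle
      omega

private lemma eq_of_equiv {A : Type*} : ∀ n, 2 ≤ n → ∀ u v : List A,
    u.length = n + 1 → v.length = n + 1 →
    (∀ w : List A, w.length ≤ n → ((w <+ u) ↔ (w <+ v))) → u = v := by
  intro n hn
  induction n, hn using Nat.le_induction with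
  | base =>
    intro u v hu hv H
    obtain ⟨a, x, c, rfl⟩ := List.length_eq_three.mp hu
    obtain ⟨d, y, q, rfl⟩ := List.length_eq_three.mp hv
    have had : a = d := head_eq le_rfl (by simp) (by simp) H
    subst had
    have H' : ∀ w : List A, w.length ≤ 2 → ((w <+ c :: [x, a]) ↔ (w <+ q :: [y, a])) := by
      intro w hw
      constructor
      · intro h
        have h1 : w.reverse <+ [a, x, c] := by simpa using h.reverse
        have h2 := (H w.reverse (by simpa using hw)).mp h1
        simpa using h2.reverse
      · intro h
        have h1 : w.reverse <+ [a, y, q] := by simpa using h.reverse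
        have h2 := (H w.reverse (by simpa using hw)).mpr h1
        simpa using h2.reverse
    have hcq : c = q := head_eq le_rfl (by simp) (by simp) H'
    subst hcq
    by_cases hxy : x = y
    · rw [hxy]
    exfalso
    have h1 : [a, x] <+ [a, y, c] :=
      (H [a, x] (by simp)).mp ((((List.nil_sublist _).cons c).cons₂ x).cons₂ a)
    have h1' : x = y ∨ x = c := by
      have := List.cons_sublist_cons.mp h1
      rw [List.singleton_sublist] at this
      simpa using this
    have hxc : x = c := h1'.resolve_left hxy
    have h2 : [x, c] <+ [a, y, c] :=
      (H [x, c] (by simp)).mp ((((List.nil_sublist _).cons₂ c).cons₂ x).cons a)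
    have hxa : x = a := by
      by_contra hxa
      have h3 := cons_sublist_of_ne hxa h2
      by_cases hxy2 : x = y
      · exact hxy hxy2
      · have h4 := cons_sublist_of_ne hxy2 h3
        simpa using h4.length_le
    have hy : [y] <+ [a, y, c] := (((List.nil_sublist _).cons c).cons₂ y).cons a
    have hmem := (H [y] (by simp)).mpr hy
    rw [List.singleton_sublist] at hmem
    have : y = a ∨ y = x ∨ y = c := by simpa using hmem
    rcases this with h | h | h
    · exact hxy (hxa.trans h.symm)
    · exact hxy h.symm
    · exact hxy (hxc.trans h.symm)
  | succ n hn ih =>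
    intro u v hu hv H
    obtain ⟨a, u₁, rfl⟩ : ∃ a u₁, u = a :: u₁ := by
      cases u with
      | nil => simp at hu
      | cons a u₁ => exact ⟨a, u₁, rfl⟩
    obtain ⟨b, v₁, rfl⟩ : ∃ b v₁, v = b :: v₁ := by
      cases v with
      | nil => simp at hv
      | cons b v₁ => exact ⟨b, v₁, rfl⟩
    have hu₁ : u₁.length = n + 1 := by simpa using hu
    have hv₁ : v₁.length = n + 1 := by simpa using hv
    have hab : a = b := head_eq (by omega) hu₁ hv₁ H
    subst hab
    have Htail : ∀ w : List A, w.length ≤ n → ((w <+ u₁) ↔ (w <+ v₁)) := by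
      intro w hw
      constructor
      · intro h
        exact List.cons_sublist_cons.mp ((H (a :: w) (by simp; omega)).mp (h.cons₂ a))
      · intro h
        exact List.cons_sublist_cons.mp ((H (a :: w) (by simp; omega)).mpr (h.cons₂ a))
    rw [ih u₁ v₁ hu₁ hv₁ Htail]

theorem not_n_equivalent_of_length_succ {A : Type*} (n : ℕ) (hn : 2 ≤ n)
    (u v : List A) (hu : u.length = n + 1) (hv : v.length = n + 1) (huv : u ≠ v) :
    ∃ w : List A, w.length ≤ n ∧ ¬ (w.Sublist u ↔ w.Sublist v) := by
  by_contra h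
  push_neg at h
  exact huv (eq_of_equiv n hn u v hu hv h)
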